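/- Propagation of the lapse constraint (first part of Lemma 2.1): under the hypotheses in the context, the scalar function ℐ := ∂_ν log Ω + 2Ωω satisfies on U the homogeneous transport equation ∂_λ ℐ + X^a ∂_a ℐ + 2Ω ω̄ ℐ = 0 (summation over a ∈ {1,2}). -/

import Mathlib

open Topology Filter Set

/-- Partial derivative in the `i`-th coordinate direction on `ℝ⁴`, with coordinates
`(λ, ν, ω¹, ω²) = (x 0, x 1, x 2, x 3)`. -/
noncomputable def pdCoord (i : Fin 4) (f : (Fin 4 → ℝ) → ℝ) (x : Fin 4 → ℝ) : ℝ :=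
  fderiv ℝ f x (Pi.single i 1)

/-- The constraint quantity `ℐ = ∂_ν log Ω + 2Ωω`. -/
noncomputable def constraintI (Ω ω : (Fin 4 → ℝ) → ℝ) : (Fin 4 → ℝ) → ℝ :=
  fun x => pdCoord 1 (fun y => Real.log (Ω y)) x + 2 * Ω x * ω x

section Aux

variable {U : Set (Fin 4 → ℝ)} {x : Fin 4 → ℝ} {f g h : (Fin 4 → ℝ) → ℝ}

lemma aux_diffAt (hU : IsOpen U) (hf : ContDiffOn ℝ (⊤ : ℕ∞) f U) (hx : x ∈ U) :
    DifferentiableAt ℝ f x :=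
  (hf.contDiffAt (hU.mem_nhds hx)).differentiableAt (by simp)

lemma aux_top_add_one : ((⊤ : ℕ∞) : WithTop ℕ∞) + 1 ≤ ((⊤ : ℕ∞) : WithTop ℕ∞) := by
  simp

lemma aux_pd_smooth (hU : IsOpen U) (hf : ContDiffOn ℝ (⊤ : ℕ∞) f U) (i : Fin 4) :
    ContDiffOn ℝ (⊤ : ℕ∞) (pdCoord i f) U := by
  have h1 : ContDiffOn ℝ (⊤ : ℕ∞) (fderiv ℝ f) U :=
    hf.fderiv_of_isOpen hU aux_top_add_one
  exact h1.clm_apply contDiffOn_const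

lemma aux_pd_zero_of_eqOn (hU : IsOpen U) (hx : x ∈ U)
    (hg : ∀ y ∈ U, g y = 0) (i : Fin 4) : pdCoord i g x = 0 := by
  have h : fderiv ℝ g x = fderiv ℝ (fun _ => (0 : ℝ)) x :=
    Filter.EventuallyEq.fderiv_eq (by
      filter_upwards [hU.mem_nhds hx] with y hy using hg y hy)
  simp [pdCoord, h]

lemma aux_pd_symm (hU : IsOpen U) (hf : ContDiffOn ℝ (⊤ : ℕ∞) f U) (hx : x ∈ U)
    (i j : Fin 4) : pdCoord i (pdCoord j f) x = pdCoord j (pdCoord i f) x := by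
  have hdf : DifferentiableAt ℝ (fderiv ℝ f) x :=
    (((hf.fderiv_of_isOpen hU aux_top_add_one).contDiffAt
      (hU.mem_nhds hx)).differentiableAt (by simp))
  have key : ∀ k l : Fin 4, pdCoord k (pdCoord l f) x
      = fderiv ℝ (fderiv ℝ f) x (Pi.single k 1) (Pi.single l 1) := by
    intro k l
    have h1 : pdCoord l f = fun y => (fderiv ℝ f y) (Pi.single l 1) := rfl
    rw [pdCoord, h1, fderiv_clm_apply hdf (differentiableAt_const _)]
    simp
  have hsym : IsSymmSndFDerivAt ℝ f x :=
    (hf.contDiffAt (hU.mem_nhds hx)).isSymmSndFDerivAt (by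
      rw [minSmoothness_of_isRCLikeNormedField]
      exact WithTop.coe_le_coe.mpr (le_top : (2 : ℕ∞) ≤ ⊤))
  rw [key, key, hsym.eq]

lemma aux_pd_log (hf : DifferentiableAt ℝ f x) (hne : f x ≠ 0) (i : Fin 4) :
    pdCoord i f x = f x * pdCoord i (fun y => Real.log (f y)) x := by
  have h := hf.hasFDerivAt.log hne
  rw [pdCoord, pdCoord, h.fderiv]
  simp only [ContinuousLinearMap.coe_smul', Pi.smul_apply, smul_eq_mul]
  field_simp

/-- Expansion of the derivative of `f + 2*g*h`. -/
lemma aux_expand (i : Fin 4) (hf : DifferentiableAt ℝ f x)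
    (hg : DifferentiableAt ℝ g x) (hh : DifferentiableAt ℝ h x) :
    pdCoord i (fun y => f y + 2 * g y * h y) x
      = pdCoord i f x + 2 * (pdCoord i g x * h x + g x * pdCoord i h x) := by
  have H : HasFDerivAt (fun y => f y + 2 * g y * h y)
      (fderiv ℝ f x + ((2 * g x) • fderiv ℝ h x + h x • ((2 : ℝ) • fderiv ℝ g x))) x :=
    hf.hasFDerivAt.add ((hg.hasFDerivAt.const_mul 2).mul hh.hasFDerivAt)
  have h2 : pdCoord i (fun y => f y + 2 * g y * h y) x
      = (fderiv ℝ f x + ((2 * g x) • fderiv ℝ h x + h x • ((2 : ℝ) • fderiv ℝ g x)))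
        (Pi.single i 1) := by
    rw [pdCoord, H.fderiv]
  rw [h2]
  simp only [ContinuousLinearMap.add_apply, ContinuousLinearMap.coe_smul', Pi.smul_apply,
    smul_eq_mul, pdCoord]
  ring

/-- Expansion of the derivative of `f + (x1*f2 + x2*f3) + 2*g*h`. -/
lemma aux_expandG (i : Fin 4) {x1 x2 f2 f3 : (Fin 4 → ℝ) → ℝ}
    (hf : DifferentiableAt ℝ f x)
    (hx1 : DifferentiableAt ℝ x1 x) (hf2 : DifferentiableAt ℝ f2 x)
    (hx2 : DifferentiableAt ℝ x2 x) (hf3 : DifferentiableAt ℝ f3 x)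
    (hg : DifferentiableAt ℝ g x) (hh : DifferentiableAt ℝ h x) :
    pdCoord i (fun y => f y + (x1 y * f2 y + x2 y * f3 y) + 2 * g y * h y) x
      = pdCoord i f x
        + (pdCoord i x1 x * f2 x + x1 x * pdCoord i f2 x
            + pdCoord i x2 x * f3 x + x2 x * pdCoord i f3 x)
        + 2 * (pdCoord i g x * h x + g x * pdCoord i h x) := by
  have H : HasFDerivAt (fun y => f y + (x1 y * f2 y + x2 y * f3 y) + 2 * g y * h y)
      ((fderiv ℝ f x + ((x1 x • fderiv ℝ f2 x + f2 x • fderiv ℝ x1 x)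
          + (x2 x • fderiv ℝ f3 x + f3 x • fderiv ℝ x2 x)))
        + ((2 * g x) • fderiv ℝ h x + h x • ((2 : ℝ) • fderiv ℝ g x))) x :=
    (hf.hasFDerivAt.add
      ((hx1.hasFDerivAt.mul hf2.hasFDerivAt).add
        (hx2.hasFDerivAt.mul hf3.hasFDerivAt))).add
      ((hg.hasFDerivAt.const_mul 2).mul hh.hasFDerivAt)
  have h2 : pdCoord i (fun y => f y + (x1 y * f2 y + x2 y * f3 y) + 2 * g y * h y) x
      = ((fderiv ℝ f x + ((x1 x • fderiv ℝ f2 x + f2 x • fderiv ℝ x1 x)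
          + (x2 x • fderiv ℝ f3 x + f3 x • fderiv ℝ x2 x)))
        + ((2 * g x) • fderiv ℝ h x + h x • ((2 : ℝ) • fderiv ℝ g x))) (Pi.single i 1) := by
    rw [pdCoord, H.fderiv]
  rw [h2]
  simp only [ContinuousLinearMap.add_apply, ContinuousLinearMap.coe_smul', Pi.smul_apply,
    smul_eq_mul, pdCoord]
  ring

end Aux

/-- **Propagation of the lapse constraint** (first part of Lemma 2.1).  On an open set
`U ⊆ ℝ⁴` with coordinates `(λ, ν, ω¹, ω²)`, assume `Ω > 0`, the metric `γ` is a smooth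
positive-definite symmetric `2×2` matrix field, and the equations
(i) `∂_λ log Ω + ∂_X log Ω + 2Ω ω̄ = 0`,
(ii) `∂_ν X^a + 4Ω² γ^{ab} ζ_b = 0`,
(iii) `∂_λ ω + ∂_X ω − 2Ω ω̄ ω + Ω ζ·ψ − (3/2)Ω|ζ|² + (1/2)Ω|ψ|² + B = 0`,
(iv) `∂_ν ω̄ − 2Ω ω ω̄ − Ω ζ·ψ − (3/2)Ω|ζ|² + (1/2)Ω|ψ|² + B = 0`
hold on `U`, where `ψ_a = ∂_a log Ω`.  Then `ℐ = ∂_ν log Ω + 2Ωω` satisfies the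
homogeneous transport equation `∂_λ ℐ + X^a ∂_a ℐ + 2Ω ω̄ ℐ = 0` on `U`. -/
theorem lapse_constraint_propagation
    (U : Set (Fin 4 → ℝ)) (hU : IsOpen U)
    (Ω ω ωb B : (Fin 4 → ℝ) → ℝ)
    (X ζ : Fin 2 → (Fin 4 → ℝ) → ℝ)
    (γ : (Fin 4 → ℝ) → Matrix (Fin 2) (Fin 2) ℝ)
    (hΩs : ContDiffOn ℝ (⊤ : ℕ∞) Ω U) (hΩpos : ∀ x ∈ U, 0 < Ω x)
    (hωs : ContDiffOn ℝ (⊤ : ℕ∞) ω U) (hωbs : ContDiffOn ℝ (⊤ : ℕ∞) ωb U)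
    (hBs : ContDiffOn ℝ (⊤ : ℕ∞) B U)
    (hXs : ∀ a, ContDiffOn ℝ (⊤ : ℕ∞) (X a) U)
    (hζs : ∀ a, ContDiffOn ℝ (⊤ : ℕ∞) (ζ a) U)
    (hγs : ∀ a b, ContDiffOn ℝ (⊤ : ℕ∞) (fun x => γ x a b) U)
    (hγsym : ∀ x ∈ U, (γ x).IsSymm) (hγpos : ∀ x ∈ U, (γ x).PosDef)
    -- (i)  ∂_λ log Ω + ∂_X log Ω + 2Ω ω̄ = 0
    (heqI : ∀ x ∈ U,
      pdCoord 0 (fun y => Real.log (Ω y)) x +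
        (∑ a : Fin 2, X a x * pdCoord a.succ.succ (fun y => Real.log (Ω y)) x) +
        2 * Ω x * ωb x = 0)
    -- (ii)  ∂_ν X^a + 4Ω² γ^{ab} ζ_b = 0
    (heqII : ∀ x ∈ U, ∀ a : Fin 2,
      pdCoord 1 (X a) x + 4 * Ω x ^ 2 * (∑ b : Fin 2, (γ x)⁻¹ a b * ζ b x) = 0)
    -- (iii)  ∂_λ ω + ∂_X ω − 2Ω ω̄ ω + Ω ζ·ψ − (3/2)Ω|ζ|² + (1/2)Ω|ψ|² + B = 0
    (heqIII : ∀ x ∈ U,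
      pdCoord 0 ω x + (∑ a : Fin 2, X a x * pdCoord a.succ.succ ω x) -
        2 * Ω x * ωb x * ω x +
        Ω x * (∑ a : Fin 2, ∑ b : Fin 2,
          (γ x)⁻¹ a b * ζ a x * pdCoord b.succ.succ (fun y => Real.log (Ω y)) x) -
        3 / 2 * Ω x * (∑ a : Fin 2, ∑ b : Fin 2, (γ x)⁻¹ a b * ζ a x * ζ b x) +
        1 / 2 * Ω x * (∑ a : Fin 2, ∑ b : Fin 2,
          (γ x)⁻¹ a b * pdCoord a.succ.succ (fun y => Real.log (Ω y)) x *
            pdCoord b.succ.succ (fun y => Real.log (Ω y)) x) +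
        B x = 0)
    -- (iv)  ∂_ν ω̄ − 2Ω ω ω̄ − Ω ζ·ψ − (3/2)Ω|ζ|² + (1/2)Ω|ψ|² + B = 0
    (heqIV : ∀ x ∈ U,
      pdCoord 1 ωb x - 2 * Ω x * ω x * ωb x -
        Ω x * (∑ a : Fin 2, ∑ b : Fin 2,
          (γ x)⁻¹ a b * ζ a x * pdCoord b.succ.succ (fun y => Real.log (Ω y)) x) -
        3 / 2 * Ω x * (∑ a : Fin 2, ∑ b : Fin 2, (γ x)⁻¹ a b * ζ a x * ζ b x) +
        1 / 2 * Ω x * (∑ a : Fin 2, ∑ b : Fin 2,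
          (γ x)⁻¹ a b * pdCoord a.succ.succ (fun y => Real.log (Ω y)) x *
            pdCoord b.succ.succ (fun y => Real.log (Ω y)) x) +
        B x = 0) :
    ∀ x ∈ U,
      pdCoord 0 (constraintI Ω ω) x +
        (∑ a : Fin 2, X a x * pdCoord a.succ.succ (constraintI Ω ω) x) +
        2 * Ω x * ωb x * constraintI Ω ω x = 0 := by
  intro x hx
  have hfin2 : ((0 : Fin 2).succ.succ : Fin 4) = 2 := rfl
  have hfin3 : ((1 : Fin 2).succ.succ : Fin 4) = 3 := rfl
  have hne : ∀ y ∈ U, Ω y ≠ 0 := fun y hy => (hΩpos y hy).ne'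
  have hLs : ContDiffOn ℝ (⊤ : ℕ∞) (fun y => Real.log (Ω y)) U := hΩs.log hne
  -- differentiability at x
  have dΩ : DifferentiableAt ℝ Ω x := aux_diffAt hU hΩs hx
  have dω : DifferentiableAt ℝ ω x := aux_diffAt hU hωs hx
  have dωb : DifferentiableAt ℝ ωb x := aux_diffAt hU hωbs hx
  have dX0 : DifferentiableAt ℝ (X 0) x := aux_diffAt hU (hXs 0) hx
  have dX1 : DifferentiableAt ℝ (X 1) x := aux_diffAt hU (hXs 1) hx
  have dL : ∀ j : Fin 4, DifferentiableAt ℝ (pdCoord j (fun y => Real.log (Ω y))) x :=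
    fun j => aux_diffAt hU (aux_pd_smooth hU hLs j) hx
  -- derivative of equation (i) in the ν direction
  have hGzero : ∀ y ∈ U,
      (fun y => pdCoord 0 (fun y => Real.log (Ω y)) y
        + (X 0 y * pdCoord 2 (fun y => Real.log (Ω y)) y
            + X 1 y * pdCoord 3 (fun y => Real.log (Ω y)) y)
        + 2 * Ω y * ωb y) y = 0 := by
    intro y hy
    simpa [Fin.sum_univ_two, hfin2, hfin3] using heqI y hy
  have hA0 : pdCoord 1
      (fun y => pdCoord 0 (fun y => Real.log (Ω y)) y
        + (X 0 y * pdCoord 2 (fun y => Real.log (Ω y)) y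
            + X 1 y * pdCoord 3 (fun y => Real.log (Ω y)) y)
        + 2 * Ω y * ωb y) x = 0 := aux_pd_zero_of_eqOn hU hx hGzero 1
  rw [aux_expandG 1 (dL 0) dX0 (dL 2) dX1 (dL 3) dΩ dωb] at hA0
  -- symmetry of second derivatives
  have hsymm : ∀ i : Fin 4,
      pdCoord i (pdCoord 1 (fun y => Real.log (Ω y))) x
        = pdCoord 1 (pdCoord i (fun y => Real.log (Ω y))) x :=
    fun i => aux_pd_symm hU hLs hx i 1
  -- log derivative conversion
  have hlog : ∀ i : Fin 4,
      pdCoord i Ω x = Ω x * pdCoord i (fun y => Real.log (Ω y)) x :=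
    fun i => aux_pd_log dΩ (hne x hx) i
  -- pointwise equations
  have hB := heqI x hx
  have hC0 := heqII x hx 0
  have hC1 := heqII x hx 1
  have hD := heqIII x hx
  have hE := heqIV x hx
  have hγinv : (γ x)⁻¹ 1 0 = (γ x)⁻¹ 0 1 := by
    have h1 : ((γ x)⁻¹).IsSymm := by
      rw [Matrix.IsSymm, Matrix.transpose_nonsing_inv, (hγsym x hx).eq]
    exact h1.apply 0 1
  simp only [Fin.sum_univ_two, hfin2, hfin3] at hB hC0 hC1 hD hE
  rw [hγinv] at hC1 hD hE
  -- expand the goal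
  have hIdef : constraintI Ω ω
      = fun y => pdCoord 1 (fun y => Real.log (Ω y)) y + 2 * Ω y * ω y := rfl
  rw [hIdef]
  simp only [Fin.sum_univ_two, hfin2, hfin3]
  rw [aux_expand 0 (dL 1) dΩ dω, aux_expand 2 (dL 1) dΩ dω, aux_expand 3 (dL 1) dΩ dω,
    hsymm 0, hsymm 2, hsymm 3, hlog 0, hlog 2, hlog 3]
  rw [hlog 1] at hA0
  linear_combination hA0 + 2 * Ω x * ω x * hB + 2 * Ω x * hD - 2 * Ω x * hE
    - pdCoord 2 (fun y => Real.log (Ω y)) x * hC0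
    - pdCoord 3 (fun y => Real.log (Ω y)) x * hC1
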